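/- arXiv:1808.01366 — 3 statements merged into one kernel-verified Lean document; each statement's English description precedes it below -/
import Mathlib

section
/- Let ρ > 1 and W be the weighted Wiener algebra with weight ρ^{|i|}. For μ ∈ ℂ with ρ^{-1} < |μ| < ρ, the operator L_μ(f)(λ) = (f(λ) − f(μ))/(λ − μ) is a bounded operator on W with norm at most max{1/(ρ − |μ|), 1/(|μ| − ρ^{-1})}. -/
set_option maxHeartbeats 1600000

lemma aux_double (f : ℕ → ℝ) (hf0 : ∀ n, 0 ≤ f n) (hf : Summable f)
    (r : ℝ) (hr0 : 0 ≤ r) (hr1 : r < 1) :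
    (∀ n, Summable fun k : ℕ => f (n + k) * r ^ k) ∧
    Summable (fun n : ℕ => ∑' k : ℕ, f (n + k) * r ^ k) ∧
    ∑' (n : ℕ), ∑' (k : ℕ), f (n + k) * r ^ k ≤ (∑' n, f n) * (1 - r)⁻¹ := by
  have hinj : ∀ m : ℕ, Function.Injective fun n : ℕ => n + m := by
    intro m a b h; simpa using h
  have hshift : ∀ m, Summable fun n : ℕ => f (n + m) := fun m => hf.comp_injective (hinj m)
  have hshift_le : ∀ m, (∑' n : ℕ, f (n + m)) ≤ ∑' n, f n := fun m =>
    (hshift m).tsum_le_tsum_of_inj _ (hinj m) (fun c _ => hf0 c) (fun n => le_rfl) hf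
  have h1 : ∀ k, Summable fun n : ℕ => f (n + k) * r ^ k := fun k => (hshift k).mul_right _
  have hsum_inner : ∀ k, (∑' n : ℕ, f (n + k) * r ^ k) = (∑' n : ℕ, f (n + k)) * r ^ k :=
    fun k => tsum_mul_right
  have hle : ∀ k : ℕ, (∑' n : ℕ, f (n + k) * r ^ k) ≤ (∑' n, f n) * r ^ k := by
    intro k
    rw [hsum_inner k]
    exact mul_le_mul_of_nonneg_right (hshift_le k) (pow_nonneg hr0 k)
  have h2 : Summable fun k : ℕ => ∑' n : ℕ, f (n + k) * r ^ k := by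
    apply Summable.of_nonneg_of_le (fun k => tsum_nonneg fun n => mul_nonneg (hf0 _)
      (pow_nonneg hr0 _)) hle ((summable_geometric_of_lt_one hr0 hr1).mul_left (∑' n, f n))
  have hg : Summable (fun p : ℕ × ℕ => f (p.2 + p.1) * r ^ p.1) := by
    rw [summable_prod_of_nonneg (fun p => mul_nonneg (hf0 _) (pow_nonneg hr0 _))]
    exact ⟨h1, h2⟩
  have hg' : Summable (fun p : ℕ × ℕ => f (p.1 + p.2) * r ^ p.2) := by
    have := (Equiv.prodComm ℕ ℕ).summable_iff.mpr hg
    exact this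
  have hsplit := (summable_prod_of_nonneg
    (f := fun p : ℕ × ℕ => f (p.1 + p.2) * r ^ p.2)
    (fun p => mul_nonneg (hf0 _) (pow_nonneg hr0 _))).mp hg'
  refine ⟨hsplit.1, hsplit.2, ?_⟩
  have e1 : ∑' (n : ℕ), ∑' (k : ℕ), f (n + k) * r ^ k
      = ∑' p : ℕ × ℕ, f (p.1 + p.2) * r ^ p.2 := (Summable.tsum_prod' hg' hsplit.1).symm
  have e2 : ∑' p : ℕ × ℕ, f (p.1 + p.2) * r ^ p.2
      = ∑' p : ℕ × ℕ, f (p.2 + p.1) * r ^ p.1 :=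
    by simpa using (Equiv.prodComm ℕ ℕ).tsum_eq (fun p : ℕ × ℕ => f (p.2 + p.1) * r ^ p.1)
  have e3 : ∑' p : ℕ × ℕ, f (p.2 + p.1) * r ^ p.1
      = ∑' (k : ℕ), ∑' (n : ℕ), f (n + k) * r ^ k := Summable.tsum_prod' hg h1
  rw [e1, e2, e3]
  calc ∑' (k : ℕ), ∑' (n : ℕ), f (n + k) * r ^ k
      ≤ ∑' (k : ℕ), (∑' n, f n) * r ^ k :=
        h2.tsum_le_tsum hle ((summable_geometric_of_lt_one hr0 hr1).mul_left _)
    _ = (∑' n, f n) * (1 - r)⁻¹ := by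
        rw [tsum_mul_left, tsum_geometric_of_lt_one hr0 hr1]

lemma zbound (ρ : ℝ) (hρ : 1 < ρ) (x : ℂ) (h1 : ρ⁻¹ < ‖x‖) (h2 : ‖x‖ < ρ) (j : ℤ) :
    ‖x ^ j‖ ≤ ρ ^ j.natAbs := by
  have hρ0 : (0:ℝ) < ρ := lt_trans one_pos hρ
  have hx0 : (0:ℝ) < ‖x‖ := lt_trans (inv_pos.mpr hρ0) h1
  rw [norm_zpow]
  cases j with
  | ofNat n =>
    simpa using pow_le_pow_left₀ (norm_nonneg x) h2.le n
  | negSucc n =>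
    have hnat : Int.natAbs (Int.negSucc n) = n + 1 := rfl
    rw [hnat, Int.negSucc_eq, zpow_neg, ← Nat.cast_succ, zpow_natCast]
    rw [inv_le_comm₀ (pow_pos hx0 _) (pow_pos hρ0 _)]
    calc (ρ ^ (n+1))⁻¹ = (ρ⁻¹) ^ (n+1) := by rw [inv_pow]
      _ ≤ ‖x‖ ^ (n+1) := pow_le_pow_left₀ (inv_nonneg.mpr hρ0.le) h1.le _

noncomputable def LmuP (μ : ℂ) (c : ℤ → ℂ) (n : ℕ) : ℂ := ∑' k : ℕ, c ((n:ℤ)+1+k) * μ ^ k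

noncomputable def LmuM (μ : ℂ) (c : ℤ → ℂ) (m : ℕ) : ℂ :=
  -∑' k : ℕ, c (-1-(m:ℤ)-k) * μ ^ (-1-(k:ℤ))

noncomputable def LmuD (μ : ℂ) (c : ℤ → ℂ) : ℤ → ℂ := fun j => Int.rec (LmuP μ c) (LmuM μ c) j

lemma LmuD_nat (μ : ℂ) (c : ℤ → ℂ) (n : ℕ) : LmuD μ c (n:ℤ) = LmuP μ c n := rfl

lemma LmuD_neg (μ : ℂ) (c : ℤ → ℂ) (n : ℕ) : LmuD μ c (-((n:ℤ)+1)) = LmuM μ c n := by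
  rw [show -((n:ℤ)+1) = Int.negSucc n from (Int.negSucc_eq n).symm]
  rfl

/-- For `μ` in the annulus `ρ⁻¹ < |μ| < ρ`, the operator
`L_μ(f)(λ) = (f(λ) - f(μ))/(λ - μ)` is bounded on the weighted Wiener algebra `W`
with norm at most `max (1/(ρ - |μ|)) (1/(|μ| - ρ⁻¹))`. -/
theorem Lmu_bounded_on_W
    (ρ : ℝ) (hρ : 1 < ρ) (μ : ℂ) (hμ1 : ρ⁻¹ < ‖μ‖) (hμ2 : ‖μ‖ < ρ) (c : ℤ → ℂ)
    (hc : Summable fun i => ‖c i‖ * ρ ^ i.natAbs) :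
    ∃ d : ℤ → ℂ,
      (Summable fun j => ‖d j‖ * ρ ^ j.natAbs) ∧
      (∑' j : ℤ, ‖d j‖ * ρ ^ j.natAbs) ≤
        max (ρ - ‖μ‖)⁻¹ (‖μ‖ - ρ⁻¹)⁻¹ * ∑' i : ℤ, ‖c i‖ * ρ ^ i.natAbs ∧
      ∀ l : ℂ, ρ⁻¹ < ‖l‖ → ‖l‖ < ρ →
        (∑' j : ℤ, d j * l ^ j) * (l - μ) =
          (∑' i : ℤ, c i * l ^ i) - (∑' i : ℤ, c i * μ ^ i) := by
  have hρ0 : (0:ℝ) < ρ := lt_trans one_pos hρ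
  have hρne : ρ ≠ 0 := ne_of_gt hρ0
  have hμ0 : (0:ℝ) < ‖μ‖ := lt_trans (inv_pos.mpr hρ0) hμ1
  have hμne : μ ≠ 0 := by simpa using norm_pos_iff.mp hμ0
  have hμnne : ‖μ‖ ≠ 0 := ne_of_gt hμ0
  set r : ℝ := ‖μ‖ / ρ with hr_def
  set s : ℝ := (‖μ‖ * ρ)⁻¹ with hs_def
  have hr0 : 0 ≤ r := div_nonneg hμ0.le hρ0.le
  have hr1 : r < 1 := (div_lt_one hρ0).mpr hμ2
  have hs0 : 0 ≤ s := inv_nonneg.mpr (mul_nonneg hμ0.le hρ0.le)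
  have hs1 : s < 1 := by
    rw [hs_def, inv_lt_one_iff₀]
    right
    calc (1:ℝ) = ρ⁻¹ * ρ := by field_simp
      _ < ‖μ‖ * ρ := by exact mul_lt_mul_of_pos_right hμ1 hρ0
  set ap : ℕ → ℝ := fun n => ‖c ((n:ℤ)+1)‖ * ρ ^ (n+1) with hap_def
  set am : ℕ → ℝ := fun m => ‖c (-1-(m:ℤ))‖ * ρ ^ (m+1) with ham_def
  have hap0 : ∀ n, 0 ≤ ap n := fun n => mul_nonneg (norm_nonneg _) (pow_nonneg hρ0.le _)
  have ham0 : ∀ n, 0 ≤ am n := fun n => mul_nonneg (norm_nonneg _) (pow_nonneg hρ0.le _)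
  have haeq_p : ∀ n : ℕ, (‖c ((n:ℤ)+1)‖ * ρ ^ ((n:ℤ)+1).natAbs) = ap n := by
    intro n
    have : ((n:ℤ)+1).natAbs = n + 1 := by omega
    rw [this]
  have haeq_m : ∀ m : ℕ, (‖c (-1-(m:ℤ))‖ * ρ ^ (-1-(m:ℤ)).natAbs) = am m := by
    intro m
    have : (-1-(m:ℤ)).natAbs = m + 1 := by omega
    rw [this]
  have hap_sum : Summable ap := by
    have h := hc.comp_injective (f := fun i : ℤ => ‖c i‖ * ρ ^ i.natAbs)
      (i := fun n : ℕ => (n:ℤ)+1) (fun a b h => by simp only [] at h; omega)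
    exact h.congr haeq_p
  have ham_sum : Summable am := by
    have h := hc.comp_injective (f := fun i : ℤ => ‖c i‖ * ρ ^ i.natAbs)
      (i := fun m : ℕ => -1-(m:ℤ)) (fun a b h => by simp only [] at h; omega)
    exact h.congr haeq_m
  obtain ⟨hup_inner, hup_outer, hup_bound⟩ := aux_double ap hap0 hap_sum r hr0 hr1
  obtain ⟨hum_inner, hum_outer, hum_bound⟩ := aux_double am ham0 ham_sum s hs0 hs1
  have idp : ∀ n k : ℕ, ‖c ((n:ℤ)+1+k)‖ * ‖μ‖ ^ k * ρ ^ n = ap (n+k) * r ^ k * ρ⁻¹ := by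
    intro n k
    have hidx : ((n:ℤ)+1+k) = (((n+k : ℕ)):ℤ)+1 := by push_cast; ring
    rw [hidx]
    simp only [hap_def, hr_def, div_pow]
    field_simp
    ring
  have idm : ∀ m k : ℕ, ‖c (-1-(m:ℤ)-k)‖ * (‖μ‖ ^ (k+1))⁻¹ * ρ ^ (m+1)
      = am (m+k) * s ^ k * ‖μ‖⁻¹ := by
    intro m k
    have hidx : (-1-(m:ℤ)-k) = -1-(((m+k : ℕ)):ℤ) := by push_cast; ring
    rw [hidx]
    simp only [ham_def, hs_def]
    rw [mul_inv, mul_pow, inv_pow, inv_pow,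
      show m+k+1 = (m+1)+k from by omega, pow_add, pow_succ]
    field_simp [hρne, hμnne]
    ring
  have hμzpow : ∀ k : ℕ, ‖μ ^ (-1-(k:ℤ))‖ = (‖μ‖ ^ (k+1))⁻¹ := by
    intro k
    rw [show (-1-(k:ℤ)) = -(((k+1 : ℕ)) : ℤ) by push_cast; ring, zpow_neg, norm_inv,
      zpow_natCast, norm_pow]
  -- bounds on powers of μ
  have hμpow_le : ∀ n k : ℕ, ‖μ‖ ^ k ≤ ρ ^ (n + k + 1) := by
    intro n k
    calc ‖μ‖ ^ k ≤ ρ ^ k := pow_le_pow_left₀ hμ0.le hμ2.le k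
      _ ≤ ρ ^ (n + k + 1) := pow_le_pow_right₀ hρ.le (by omega)
  have hμinv_le : ∀ m k : ℕ, (‖μ‖ ^ (k+1))⁻¹ ≤ ρ ^ (m + k + 1) := by
    intro m k
    have h1 : (ρ⁻¹) ^ (k+1) ≤ ‖μ‖ ^ (k+1) := pow_le_pow_left₀ (inv_nonneg.mpr hρ0.le) hμ1.le _
    have h2 : (‖μ‖ ^ (k+1))⁻¹ ≤ ((ρ⁻¹) ^ (k+1))⁻¹ := by
      apply inv_anti₀ (pow_pos (inv_pos.mpr hρ0) _) h1
    calc (‖μ‖ ^ (k+1))⁻¹ ≤ ((ρ⁻¹) ^ (k+1))⁻¹ := h2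
      _ = ρ ^ (k+1) := by rw [inv_pow, inv_inv]
      _ ≤ ρ ^ (m + k + 1) := pow_le_pow_right₀ hρ.le (by omega)
  -- summability of the defining series for LmuD μ c
  have hspn : ∀ n : ℕ, Summable fun k : ℕ => ‖c ((n:ℤ)+1+k) * μ ^ k‖ := by
    intro n
    apply Summable.of_nonneg_of_le (fun k => norm_nonneg _) (fun k => ?_)
      (hap_sum.comp_injective (i := fun k : ℕ => n + k) (fun a b h => by simpa using h))
    rw [norm_mul, norm_pow]
    simp only [hap_def]
    have hidx : ((n:ℤ)+1+k) = (((n+k : ℕ)):ℤ)+1 := by push_cast; ring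
    rw [hidx]
    exact mul_le_mul_of_nonneg_left (hμpow_le n k) (norm_nonneg _)
  have hsmn : ∀ m : ℕ, Summable fun k : ℕ => ‖c (-1-(m:ℤ)-k) * μ ^ (-1-(k:ℤ))‖ := by
    intro m
    apply Summable.of_nonneg_of_le (fun k => norm_nonneg _) (fun k => ?_)
      (ham_sum.comp_injective (i := fun k : ℕ => m + k) (fun a b h => by simpa using h))
    rw [norm_mul, hμzpow k]
    simp only [ham_def]
    have hidx : (-1-(m:ℤ)-k) = -1-(((m+k : ℕ)):ℤ) := by push_cast; ring
    rw [hidx]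
    exact mul_le_mul_of_nonneg_left (hμinv_le m k) (norm_nonneg _)
  have hsp : ∀ n : ℕ, Summable fun k : ℕ => c ((n:ℤ)+1+k) * μ ^ k :=
    fun n => (hspn n).of_norm
  have hsm : ∀ m : ℕ, Summable fun k : ℕ => c (-1-(m:ℤ)-k) * μ ^ (-1-(k:ℤ)) :=
    fun m => (hsmn m).of_norm
  -- the candidate coefficients
  have hd_nat : ∀ n : ℕ, LmuD μ c (n : ℤ) = LmuP μ c n := LmuD_nat μ c
  have hd_neg : ∀ n : ℕ, LmuD μ c (-((n:ℤ)+1)) = LmuM μ c n := LmuD_neg μ c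
  -- the weighted norm bounds for LmuP μ c and LmuM μ c
  have hEp : ∀ n : ℕ, ‖LmuP μ c n‖ * ρ ^ n ≤ (∑' k : ℕ, ap (n+k) * r ^ k) * ρ⁻¹ := by
    intro n
    have h1 : ‖LmuP μ c n‖ ≤ ∑' k : ℕ, ‖c ((n:ℤ)+1+k) * μ ^ k‖ := norm_tsum_le_tsum_norm (hspn n)
    calc ‖LmuP μ c n‖ * ρ ^ n ≤ (∑' k : ℕ, ‖c ((n:ℤ)+1+k) * μ ^ k‖) * ρ ^ n :=
          mul_le_mul_of_nonneg_right h1 (pow_nonneg hρ0.le n)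
      _ = ∑' k : ℕ, ‖c ((n:ℤ)+1+k) * μ ^ k‖ * ρ ^ n := tsum_mul_right.symm
      _ = ∑' k : ℕ, ap (n+k) * r ^ k * ρ⁻¹ := by
          apply tsum_congr
          intro k
          rw [norm_mul, norm_pow, idp n k]
      _ = (∑' k : ℕ, ap (n+k) * r ^ k) * ρ⁻¹ := tsum_mul_right
  have hEm : ∀ m : ℕ, ‖LmuM μ c m‖ * ρ ^ (m+1) ≤ (∑' k : ℕ, am (m+k) * s ^ k) * ‖μ‖⁻¹ := by
    intro m
    have h1 : ‖LmuM μ c m‖ ≤ ∑' k : ℕ, ‖c (-1-(m:ℤ)-k) * μ ^ (-1-(k:ℤ))‖ := by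
      rw [LmuM]
      simp only [norm_neg]
      exact norm_tsum_le_tsum_norm (hsmn m)
    calc ‖LmuM μ c m‖ * ρ ^ (m+1) ≤ (∑' k : ℕ, ‖c (-1-(m:ℤ)-k) * μ ^ (-1-(k:ℤ))‖) * ρ ^ (m+1) :=
          mul_le_mul_of_nonneg_right h1 (pow_nonneg hρ0.le _)
      _ = ∑' k : ℕ, ‖c (-1-(m:ℤ)-k) * μ ^ (-1-(k:ℤ))‖ * ρ ^ (m+1) := tsum_mul_right.symm
      _ = ∑' k : ℕ, am (m+k) * s ^ k * ‖μ‖⁻¹ := by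
          apply tsum_congr
          intro k
          rw [norm_mul, hμzpow k, idm m k]
      _ = (∑' k : ℕ, am (m+k) * s ^ k) * ‖μ‖⁻¹ := tsum_mul_right
  -- the ℤ-indexed weighted norms
  have hEcongr_p : ∀ n : ℕ, ‖LmuD μ c ((n:ℤ))‖ * ρ ^ ((n:ℤ)).natAbs = ‖LmuP μ c n‖ * ρ ^ n := by
    intro n
    rw [hd_nat n, Int.natAbs_natCast]
  have hEcongr_m : ∀ n : ℕ, ‖LmuD μ c (-((n:ℤ)+1))‖ * ρ ^ ((-((n:ℤ)+1)).natAbs) = ‖LmuM μ c n‖ * ρ ^ (n+1) := by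
    intro n
    rw [hd_neg n, show ((-((n:ℤ)+1)).natAbs) = n + 1 from by omega]
  have hEp_sum : Summable fun n : ℕ => ‖LmuP μ c n‖ * ρ ^ n := by
    apply Summable.of_nonneg_of_le
      (fun n => mul_nonneg (norm_nonneg _) (pow_nonneg hρ0.le _)) hEp
      (hup_outer.mul_right ρ⁻¹)
  have hEm_sum : Summable fun n : ℕ => ‖LmuM μ c n‖ * ρ ^ (n+1) := by
    apply Summable.of_nonneg_of_le
      (fun n => mul_nonneg (norm_nonneg _) (pow_nonneg hρ0.le _)) hEm
      (hum_outer.mul_right ‖μ‖⁻¹)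
  have hE : Summable fun j : ℤ => ‖LmuD μ c j‖ * ρ ^ j.natAbs := by
    apply Summable.of_nat_of_neg_add_one
    · exact hEp_sum.congr fun n => (hEcongr_p n).symm
    · exact hEm_sum.congr fun n => (hEcongr_m n).symm
  refine ⟨LmuD μ c, hE, ?_, ?_⟩
  · -- the norm bound
    have hC1 : (1-r)⁻¹ * ρ⁻¹ = (ρ - ‖μ‖)⁻¹ := by
      rw [hr_def, ← mul_inv]
      congr 1
      field_simp
    have hC2 : (1-s)⁻¹ * ‖μ‖⁻¹ = (‖μ‖ - ρ⁻¹)⁻¹ := by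
      have key : (1 - s) * ‖μ‖ = ‖μ‖ - ρ⁻¹ := by
        rw [hs_def, sub_mul, one_mul, mul_inv, mul_comm (‖μ‖)⁻¹ ρ⁻¹, mul_assoc,
          inv_mul_cancel₀ hμnne, mul_one]
      rw [← mul_inv, key]
    have hC1nn : (0:ℝ) ≤ (ρ - ‖μ‖)⁻¹ := inv_nonneg.mpr (by linarith)
    have hC2nn : (0:ℝ) ≤ (‖μ‖ - ρ⁻¹)⁻¹ := inv_nonneg.mpr (by linarith)
    have hMnn : (0:ℝ) ≤ max (ρ - ‖μ‖)⁻¹ (‖μ‖ - ρ⁻¹)⁻¹ := le_trans hC1nn (le_max_left _ _)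
    have hSp_nn : (0:ℝ) ≤ ∑' n, ap n := tsum_nonneg hap0
    have hSm_nn : (0:ℝ) ≤ ∑' n, am n := tsum_nonneg ham0
    -- split the ℤ-sum of the weights of c
    have hc_nat : Summable fun n : ℕ => ‖c ((n:ℤ)+1)‖ * ρ ^ ((n:ℤ)+1).natAbs :=
      hap_sum.congr fun n => (haeq_p n).symm
    have hc_neg : Summable fun n : ℕ => ‖c (-((n:ℤ)+1))‖ * ρ ^ ((-((n:ℤ)+1)).natAbs) := by
      apply ham_sum.congr
      intro n
      rw [show -((n:ℤ)+1) = -1-(n:ℤ) from by ring, haeq_m n]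
    have hS_split : (∑' n, ap n) + (∑' n, am n) ≤ ∑' i : ℤ, ‖c i‖ * ρ ^ i.natAbs := by
      rw [tsum_of_add_one_of_neg_add_one (f := fun i : ℤ => ‖c i‖ * ρ ^ i.natAbs) hc_nat hc_neg]
      have e1 : (∑' n : ℕ, ‖c ((n:ℤ)+1)‖ * ρ ^ ((n:ℤ)+1).natAbs) = ∑' n, ap n :=
        tsum_congr haeq_p
      have e2 : (∑' n : ℕ, ‖c (-((n:ℤ)+1))‖ * ρ ^ ((-((n:ℤ)+1)).natAbs)) = ∑' n, am n := by
        apply tsum_congr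
        intro n
        rw [show -((n:ℤ)+1) = -1-(n:ℤ) from by ring, haeq_m n]
      rw [e1, e2]
      have : 0 ≤ ‖c 0‖ * ρ ^ (0:ℤ).natAbs := mul_nonneg (norm_nonneg _) (pow_nonneg hρ0.le _)
      linarith
    calc ∑' j : ℤ, ‖LmuD μ c j‖ * ρ ^ j.natAbs
        = (∑' n : ℕ, ‖LmuD μ c ((n:ℤ))‖ * ρ ^ ((n:ℤ)).natAbs)
            + ∑' n : ℕ, ‖LmuD μ c (-((n:ℤ)+1))‖ * ρ ^ ((-((n:ℤ)+1)).natAbs) :=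
          tsum_of_nat_of_neg_add_one (f := fun j : ℤ => ‖LmuD μ c j‖ * ρ ^ j.natAbs)
            (hEp_sum.congr fun n => (hEcongr_p n).symm)
            (hEm_sum.congr fun n => (hEcongr_m n).symm)
      _ = (∑' n : ℕ, ‖LmuP μ c n‖ * ρ ^ n) + ∑' n : ℕ, ‖LmuM μ c n‖ * ρ ^ (n+1) := by
          rw [tsum_congr hEcongr_p, tsum_congr hEcongr_m]
      _ ≤ (∑' n : ℕ, (∑' k : ℕ, ap (n+k) * r ^ k) * ρ⁻¹)
            + ∑' n : ℕ, (∑' k : ℕ, am (n+k) * s ^ k) * ‖μ‖⁻¹ := by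
          apply add_le_add
          · exact hEp_sum.tsum_le_tsum hEp (hup_outer.mul_right _)
          · exact hEm_sum.tsum_le_tsum hEm (hum_outer.mul_right _)
      _ = (∑' (n : ℕ), ∑' (k : ℕ), ap (n+k) * r ^ k) * ρ⁻¹
            + (∑' (n : ℕ), ∑' (k : ℕ), am (n+k) * s ^ k) * ‖μ‖⁻¹ := by
          rw [tsum_mul_right, tsum_mul_right]
      _ ≤ ((∑' n, ap n) * (1-r)⁻¹) * ρ⁻¹ + ((∑' n, am n) * (1-s)⁻¹) * ‖μ‖⁻¹ := by
          apply add_le_add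
          · exact mul_le_mul_of_nonneg_right hup_bound (inv_nonneg.mpr hρ0.le)
          · exact mul_le_mul_of_nonneg_right hum_bound (inv_nonneg.mpr hμ0.le)
      _ = (∑' n, ap n) * (ρ - ‖μ‖)⁻¹ + (∑' n, am n) * (‖μ‖ - ρ⁻¹)⁻¹ := by
          rw [mul_assoc, mul_assoc, hC1, hC2]
      _ ≤ (∑' n, ap n) * max (ρ - ‖μ‖)⁻¹ (‖μ‖ - ρ⁻¹)⁻¹
            + (∑' n, am n) * max (ρ - ‖μ‖)⁻¹ (‖μ‖ - ρ⁻¹)⁻¹ := by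
          apply add_le_add
          · exact mul_le_mul_of_nonneg_left (le_max_left _ _) hSp_nn
          · exact mul_le_mul_of_nonneg_left (le_max_right _ _) hSm_nn
      _ = max (ρ - ‖μ‖)⁻¹ (‖μ‖ - ρ⁻¹)⁻¹ * ((∑' n, ap n) + (∑' n, am n)) := by ring
      _ ≤ max (ρ - ‖μ‖)⁻¹ (‖μ‖ - ρ⁻¹)⁻¹ * ∑' i : ℤ, ‖c i‖ * ρ ^ i.natAbs :=
          mul_le_mul_of_nonneg_left hS_split hMnn
  · -- the functional equation
    intro l hl1 hl2
    have hl0 : (0:ℝ) < ‖l‖ := lt_trans (inv_pos.mpr hρ0) hl1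
    have hlne : l ≠ 0 := norm_pos_iff.mp hl0
    have hsum_dl : Summable fun j : ℤ => LmuD μ c j * l ^ j := by
      apply Summable.of_norm
      apply Summable.of_nonneg_of_le (fun j => norm_nonneg _) (fun j => ?_) hE
      rw [norm_mul]
      exact mul_le_mul_of_nonneg_left (zbound ρ hρ l hl1 hl2 j) (norm_nonneg _)
    have hsum_cl : Summable fun i : ℤ => c i * l ^ i := by
      apply Summable.of_norm
      apply Summable.of_nonneg_of_le (fun i => norm_nonneg _) (fun i => ?_) hc
      rw [norm_mul]
      exact mul_le_mul_of_nonneg_left (zbound ρ hρ l hl1 hl2 i) (norm_nonneg _)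
    have hsum_cμ : Summable fun i : ℤ => c i * μ ^ i := by
      apply Summable.of_norm
      apply Summable.of_nonneg_of_le (fun i => norm_nonneg _) (fun i => ?_) hc
      rw [norm_mul]
      exact mul_le_mul_of_nonneg_left (zbound ρ hρ μ hμ1 hμ2 i) (norm_nonneg _)
    -- recurrence relations
    have recP : ∀ n : ℕ, LmuP μ c n - μ * LmuP μ c (n+1) = c ((n:ℤ)+1) := by
      intro n
      have e2 : μ * LmuP μ c (n+1)
          = ∑' k : ℕ, c ((n:ℤ)+1+((k+1:ℕ):ℤ)) * μ ^ (k+1) := by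
        rw [LmuP, ← tsum_mul_left]
        apply tsum_congr
        intro k
        rw [show (((n+1:ℕ)):ℤ)+1+(k:ℤ) = (n:ℤ)+1+((k+1:ℕ):ℤ) from by push_cast; ring]
        ring
      rw [e2, LmuP, Summable.tsum_eq_zero_add (hsp n), add_sub_cancel_right]
      simp
    have rec0 : LmuM μ c 0 - μ * LmuP μ c 0 = c 0 - ∑' i : ℤ, c i * μ ^ i := by
      have hFa : Summable fun n : ℕ => c ((n:ℤ)+1) * μ ^ ((n:ℤ)+1) :=
        hsum_cμ.comp_injective (i := fun n : ℕ => (n:ℤ)+1)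
          (fun a b h => by simp only [] at h; omega)
      have hFb : Summable fun n : ℕ => c (-((n:ℤ)+1)) * μ ^ (-((n:ℤ)+1)) :=
        hsum_cμ.comp_injective (i := fun n : ℕ => -((n:ℤ)+1))
          (fun a b h => by simp only [] at h; omega)
      have eF : (∑' i : ℤ, c i * μ ^ i)
          = (∑' n : ℕ, c ((n:ℤ)+1) * μ ^ ((n:ℤ)+1)) + c 0 * μ ^ (0:ℤ)
            + ∑' n : ℕ, c (-((n:ℤ)+1)) * μ ^ (-((n:ℤ)+1)) :=
        tsum_of_add_one_of_neg_add_one (f := fun i : ℤ => c i * μ ^ i) hFa hFb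
      have eP : μ * LmuP μ c 0 = ∑' n : ℕ, c ((n:ℤ)+1) * μ ^ ((n:ℤ)+1) := by
        rw [LmuP, ← tsum_mul_left]
        apply tsum_congr
        intro k
        rw [show (((0:ℕ)):ℤ)+1+(k:ℤ) = (k:ℤ)+1 from by push_cast; ring,
          zpow_add_one₀ hμne, zpow_natCast]
        ring
      have eM : LmuM μ c 0 = -∑' n : ℕ, c (-((n:ℤ)+1)) * μ ^ (-((n:ℤ)+1)) := by
        rw [LmuM]
        congr 1
        apply tsum_congr
        intro k
        rw [show (-1-((0:ℕ):ℤ)-(k:ℤ)) = -((k:ℤ)+1) from by push_cast; ring,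
          show (-1-(k:ℤ)) = -((k:ℤ)+1) from by ring]
      rw [eM, eP, eF, zpow_zero]
      ring
    have recM : ∀ m : ℕ, LmuM μ c (m+1) - μ * LmuM μ c m = c (-1-(m:ℤ)) := by
      intro m
      have hA : Summable fun k : ℕ => c (-1-(m:ℤ)-k) * μ ^ (-(k:ℤ)) := by
        apply ((hsm m).mul_left μ).congr
        intro k
        rw [show (-(k:ℤ)) = 1 + (-1-(k:ℤ)) from by ring, zpow_add₀ hμne, zpow_one]
        ring
      have eμM : μ * LmuM μ c m = -∑' k : ℕ, c (-1-(m:ℤ)-k) * μ ^ (-(k:ℤ)) := by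
        rw [LmuM, mul_neg, ← tsum_mul_left]
        congr 1
        apply tsum_congr
        intro k
        rw [show (-(k:ℤ)) = 1 + (-1-(k:ℤ)) from by ring, zpow_add₀ hμne, zpow_one]
        ring
      have eM1 : LmuM μ c (m+1)
          = -∑' k : ℕ, c (-1-(m:ℤ)-((k+1:ℕ):ℤ)) * μ ^ (-((k+1:ℕ):ℤ)) := by
        rw [LmuM]
        congr 1
        apply tsum_congr
        intro k
        rw [show (-1-((m+1:ℕ):ℤ)-(k:ℤ)) = -1-(m:ℤ)-((k+1:ℕ):ℤ) from by push_cast; ring,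
          show (-1-(k:ℤ)) = -(((k+1:ℕ)):ℤ) from by push_cast; ring]
      rw [eM1, eμM, Summable.tsum_eq_zero_add hA]
      simp
    -- the full recurrence over ℤ
    have hrec : ∀ j : ℤ, LmuD μ c (j-1) - μ * LmuD μ c j
        = c j - (if j = 0 then (∑' i : ℤ, c i * μ ^ i) else 0) := by
      intro j
      cases j with
      | ofNat n =>
        cases n with
        | zero =>
          have h1 : (Int.ofNat 0) = ((0:ℕ):ℤ) := rfl
          rw [h1, if_pos (by norm_num)]
          rw [show ((0:ℕ):ℤ) - 1 = -(((0:ℕ):ℤ)+1) from by norm_num, hd_neg 0, hd_nat 0]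
          simpa using rec0
        | succ n =>
          have h1 : (Int.ofNat (n+1)) = ((n+1:ℕ):ℤ) := rfl
          rw [h1, if_neg (by omega), sub_zero,
            show ((n+1:ℕ):ℤ) - 1 = ((n:ℕ):ℤ) from by push_cast; ring,
            hd_nat n, hd_nat (n+1),
            show ((n+1:ℕ):ℤ) = (n:ℤ)+1 from by push_cast; ring]
          exact recP n
      | negSucc m =>
        rw [Int.negSucc_eq m, if_neg (by omega), sub_zero,
          show -((m:ℤ)+1) - 1 = -(((m+1:ℕ):ℤ)+1) from by push_cast; ring,
          hd_neg (m+1), hd_neg m,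
          show -((m:ℤ)+1) = -1-(m:ℤ) from by ring]
        exact recM m
    -- auxiliary summabilities for the final computation
    have hsum_dl1 : Summable fun j : ℤ => LmuD μ c j * l ^ (j+1) := by
      apply (hsum_dl.mul_right l).congr
      intro j
      rw [zpow_add_one₀ hlne]
      ring
    have hsum_dl' : Summable fun j : ℤ => LmuD μ c (j-1) * l ^ j := by
      apply ((Equiv.addRight (1:ℤ)).summable_iff
        (f := fun j : ℤ => LmuD μ c (j-1) * l ^ j)).mp
      apply hsum_dl1.congr
      intro j
      simp
    have e_shift : ∑' j : ℤ, LmuD μ c j * l ^ (j+1) = ∑' j : ℤ, LmuD μ c (j-1) * l ^ j := by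
      rw [← (Equiv.addRight (1:ℤ)).tsum_eq (fun j : ℤ => LmuD μ c (j-1) * l ^ j)]
      apply tsum_congr
      intro j
      simp
    have hmul : Summable fun j : ℤ => (μ * LmuD μ c j) * l ^ j := by
      apply (hsum_dl.mul_left μ).congr
      intro j
      ring
    have hpt : ∀ j : ℤ, (if j = 0 then (∑' i : ℤ, c i * μ ^ i) else 0) * l ^ j
        = (if j = 0 then (∑' i : ℤ, c i * μ ^ i) else 0) := by
      intro j
      by_cases h : j = 0 <;> simp [h]
    have hite : Summable fun j : ℤ => (if j = 0 then (∑' i : ℤ, c i * μ ^ i) else 0) * l ^ j :=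
      ((hasSum_ite_eq (0:ℤ) (∑' i : ℤ, c i * μ ^ i)).summable).congr fun j => (hpt j).symm
    calc (∑' j : ℤ, LmuD μ c j * l ^ j) * (l - μ)
        = (∑' j : ℤ, LmuD μ c j * l ^ j) * l - (∑' j : ℤ, LmuD μ c j * l ^ j) * μ := by ring
      _ = (∑' j : ℤ, LmuD μ c j * l ^ (j+1)) - ∑' j : ℤ, (μ * LmuD μ c j) * l ^ j := by
          congr 1
          · rw [← tsum_mul_right]
            apply tsum_congr
            intro j
            rw [zpow_add_one₀ hlne]
            ring
          · rw [← tsum_mul_right]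
            apply tsum_congr
            intro j
            ring
      _ = (∑' j : ℤ, LmuD μ c (j-1) * l ^ j) - ∑' j : ℤ, (μ * LmuD μ c j) * l ^ j := by
          rw [e_shift]
      _ = ∑' j : ℤ, (LmuD μ c (j-1) * l ^ j - (μ * LmuD μ c j) * l ^ j) :=
          (Summable.tsum_sub hsum_dl' hmul).symm
      _ = ∑' j : ℤ, (c j * l ^ j - (if j = 0 then (∑' i : ℤ, c i * μ ^ i) else 0) * l ^ j) := by
          apply tsum_congr
          intro j
          rw [← sub_mul, hrec j, sub_mul]
      _ = (∑' j : ℤ, c j * l ^ j)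
            - ∑' j : ℤ, (if j = 0 then (∑' i : ℤ, c i * μ ^ i) else 0) * l ^ j :=
          Summable.tsum_sub hsum_cl hite
      _ = (∑' i : ℤ, c i * l ^ i) - (∑' i : ℤ, c i * μ ^ i) := by
          congr 1
          rw [tsum_congr hpt, tsum_ite_eq]
end

section
/- Let ξ^C = [[0,0],[1,0]] dz be the catenoid potential and for μ ∈ ℂ let G(z,λ) = [[(1−λ)/(2(z−μ)), −1],[λ, 2(z−μ)]]. Then the gauged potential ξ^C · G := G^{-1} ξ^C G + G^{-1} dG equals [[(λ−1)/(2(z−μ)), 1],[(1−λ²)/(4(z−μ)²), (1−λ)/(2(z−μ))]] dz. In particular, at λ = 1 the gauged potential equals [[0,1],[0,0]] dz. -/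
open Matrix

/-- The gauge `G(z,λ)` used to gauge the catenoid potential. -/
noncomputable def gaugeG (μ z l : ℂ) : Matrix (Fin 2) (Fin 2) ℂ :=
  !![(1 - l) / (2 * (z - μ)), -1; l, 2 * (z - μ)]

lemma deriv_gaugeG (μ z l : ℂ) (hz : z ≠ μ) :
    Matrix.of (fun i j => deriv (fun w => gaugeG μ w l i j) z)
      = !![-(1 - l) / (2 * (z - μ) ^ 2), 0; 0, 2] := by
  have hzμ : z - μ ≠ 0 := sub_ne_zero.mpr hz
  have h2 : (2 : ℂ) * (z - μ) ≠ 0 := by simp [hzμ]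
  have h00 : HasDerivAt (fun w : ℂ => (1 - l) / (2 * (w - μ)))
      ((1 - l) * (-(2 * 1) / (2 * (z - μ)) ^ 2)) z := by
    simpa [div_eq_mul_inv] using
      ((((hasDerivAt_id z).sub_const μ).const_mul 2).inv h2).const_mul (1 - l)
  have h11 : HasDerivAt (fun w : ℂ => 2 * (w - μ)) (2 * 1) z :=
    ((hasDerivAt_id z).sub_const μ).const_mul 2
  ext i j
  fin_cases i <;> fin_cases j <;>
    simp [gaugeG, h00.deriv, h11.deriv] <;>
    field_simp <;> ring

lemma gaugeG_inv (μ z l : ℂ) (hz : z ≠ μ) :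
    (gaugeG μ z l)⁻¹ = !![2 * (z - μ), 1; -l, (1 - l) / (2 * (z - μ))] := by
  have hzμ : z - μ ≠ 0 := sub_ne_zero.mpr hz
  apply Matrix.inv_eq_left_inv
  ext i j
  fin_cases i <;> fin_cases j <;>
    simp [gaugeG, Matrix.mul_apply, Fin.sum_univ_two] <;> field_simp <;> ring

/-- Gauging the catenoid potential `ξ^C = [[0,0],[1,0]] dz` by `G` yields
`[[(λ−1)/(2(z−μ)), 1],[(1−λ²)/(4(z−μ)²), (1−λ)/(2(z−μ))]] dz`; at `λ = 1` the gauged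
potential is `[[0,1],[0,0]] dz`. -/
theorem gauged_catenoid_potential (μ z l : ℂ) (hz : z ≠ μ) :
    (gaugeG μ z l)⁻¹ * !![0, 0; 1, 0] * gaugeG μ z l
      + (gaugeG μ z l)⁻¹ * Matrix.of (fun i j => deriv (fun w => gaugeG μ w l i j) z)
    = !![(l - 1) / (2 * (z - μ)), 1;
         (1 - l ^ 2) / (4 * (z - μ) ^ 2), (1 - l) / (2 * (z - μ))] ∧
    (l = 1 →
      (gaugeG μ z l)⁻¹ * !![0, 0; 1, 0] * gaugeG μ z l
        + (gaugeG μ z l)⁻¹ * Matrix.of (fun i j => deriv (fun w => gaugeG μ w l i j) z)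
      = !![0, 1; 0, 0]) := by
  have hzμ : z - μ ≠ 0 := sub_ne_zero.mpr hz
  have key : (gaugeG μ z l)⁻¹ * !![0, 0; 1, 0] * gaugeG μ z l
      + (gaugeG μ z l)⁻¹ * Matrix.of (fun i j => deriv (fun w => gaugeG μ w l i j) z)
    = !![(l - 1) / (2 * (z - μ)), 1;
         (1 - l ^ 2) / (4 * (z - μ) ^ 2), (1 - l) / (2 * (z - μ))] := by
    rw [deriv_gaugeG μ z l hz, gaugeG_inv μ z l hz]
    ext i j
    fin_cases i <;> fin_cases j <;>
      simp [gaugeG, Matrix.mul_apply, Fin.sum_univ_two] <;>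
        first | (field_simp; ring) | norm_num | ring
  refine ⟨key, fun hl => ?_⟩
  rw [key, hl]
  norm_num
end

section
/- Let g(t,s,z) be a C^∞ function of (t,s) in a neighborhood of (0,0) ∈ ℝ² and z in an open subset Ω of a finite-dimensional normed space, with values in a Banach space, such that g(0,s,z) is independent of s. Define f(t,z) = g(t, t·log|t|, z) for t ≠ 0 and f(0,z) = g(0,0,z). Then f is of class C¹ on a neighborhood of {0} × Ω, with df(0,z₀) = (∂g/∂t)(0,0,z₀) dt + d_z g(0,0,z₀). -/
open Set Filter Topology ContinuousLinearMap

set_option maxHeartbeats 2000000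

/-- If `g(t,s,z)` is smooth near `(0,0) × Ω` with `g(0,s,z)` independent of `s`, then
`f(t,z) = g(t, t log|t|, z)` (extended by `g(0,0,z)` at `t = 0`) is `C¹` near `{0} × Ω`,
with `df(0,z₀) = ∂g/∂t(0,0,z₀) dt + d_z g(0,0,z₀)`. -/
theorem C1_of_tlogt
    {E B : Type*}
    [NormedAddCommGroup E] [NormedSpace ℝ E] [FiniteDimensional ℝ E]
    [NormedAddCommGroup B] [NormedSpace ℝ B] [CompleteSpace B]
    (Ω : Set E) (hΩ : IsOpen Ω)
    (V : Set (ℝ × ℝ)) (hV : V ∈ nhds ((0, 0) : ℝ × ℝ))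
    (g : ℝ → ℝ → E → B)
    (hg : ContDiffOn ℝ (⊤ : ℕ∞) (fun p : (ℝ × ℝ) × E => g p.1.1 p.1.2 p.2) (V ×ˢ Ω))
    (hind : ∀ s z, ((0 : ℝ), s) ∈ V → z ∈ Ω → g 0 s z = g 0 0 z)
    (f : ℝ → E → B)
    (hf : ∀ t z, f t z = if t = 0 then g 0 0 z else g t (t * Real.log |t|) z) :
    ∃ U : Set (ℝ × E), IsOpen U ∧ (∀ z ∈ Ω, ((0 : ℝ), z) ∈ U) ∧
      ContDiffOn ℝ 1 (fun p : ℝ × E => f p.1 p.2) U ∧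
      ∀ z₀ ∈ Ω, HasFDerivAt (fun p : ℝ × E => f p.1 p.2)
        ((ContinuousLinearMap.fst ℝ ℝ E).smulRight (deriv (fun t => g t 0 z₀) 0)
          + (fderiv ℝ (fun z => g 0 0 z) z₀).comp (ContinuousLinearMap.snd ℝ ℝ E))
        ((0 : ℝ), z₀) := by
  classical
  -- Setup
  set W : Set ((ℝ × ℝ) × E) := (interior V) ×ˢ Ω with hWdef
  have hWo : IsOpen W := isOpen_interior.prod hΩ
  set G : (ℝ × ℝ) × E → B := fun p => g p.1.1 p.1.2 p.2 with hGdef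
  have hG : ContDiffOn ℝ (⊤ : ℕ∞) G W :=
    hg.mono (Set.prod_mono interior_subset subset_rfl)
  set φ : ℝ → ℝ := fun t => t * Real.log t with hφdef
  have hφc : Continuous φ := Real.continuous_mul_log
  have hφ0 : φ 0 = 0 := by simp [hφdef]
  set Φ : ℝ × E → (ℝ × ℝ) × E := fun p => ((p.1, φ p.1), p.2) with hΦdef
  have hΦc : Continuous Φ :=
    ((continuous_fst.prodMk (hφc.comp continuous_fst)).prodMk continuous_snd)
  have hfG : (fun p : ℝ × E => f p.1 p.2) = fun p => G (Φ p) := by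
    funext p
    rcases eq_or_ne p.1 0 with h | h
    · simp [hf, h, hGdef, hΦdef, hφ0]
    · simp [hf, h, hGdef, hΦdef, hφdef, Real.log_abs]
  -- derivative data
  set D : (ℝ × ℝ) × E → ((ℝ × ℝ) × E →L[ℝ] B) := fderiv ℝ G with hDdef
  have hDq : ∀ q ∈ W, HasFDerivAt G (D q) q := fun q hq =>
    ((hG.differentiableOn (by norm_num)).differentiableAt (hWo.mem_nhds hq)).hasFDerivAt
  have hDcont : ContinuousOn D W := hG.continuousOn_fderiv_of_isOpen hWo (by norm_num)
  have hDsm : ContDiffOn ℝ (⊤ : ℕ∞) D W := hG.fderiv_of_isOpen hWo (by norm_num)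
  set D₁ : (ℝ × ℝ) × E → B := fun q => D q ((1, 0), 0) with hD₁def
  set D₂ : (ℝ × ℝ) × E → B := fun q => D q ((0, 1), 0) with hD₂def
  set DZ : (ℝ × ℝ) × E → (E →L[ℝ] B) :=
    fun q => (D q).comp (ContinuousLinearMap.inr ℝ (ℝ × ℝ) E) with hDZdef
  have hD₁c : ContinuousOn D₁ W := hDcont.clm_apply continuousOn_const
  have hD₂c : ContinuousOn D₂ W := hDcont.clm_apply continuousOn_const
  have hDZc : ContinuousOn DZ W := hDcont.clm_comp continuousOn_const
  have hD₂sm : ContDiffOn ℝ (⊤ : ℕ∞) D₂ W :=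
    (ContinuousLinearMap.apply ℝ B (((0:ℝ), (1:ℝ)), (0:E))).contDiff.comp_contDiffOn hDsm
  -- linear decomposition of D q
  have hDdec : ∀ q, ∀ a b : ℝ, ∀ v : E,
      D q ((a, b), v) = a • D₁ q + b • D₂ q + DZ q v := by
    intro q a b v
    have h : ((a, b), v)
        = a • ((((1:ℝ), (0:ℝ)), (0:E))) + b • ((((0:ℝ), (1:ℝ)), (0:E)))
          + (((0:ℝ), (0:ℝ)), v) := by
      simp [Prod.ext_iff]
    rw [h, map_add, map_add, map_smul, map_smul]
    rfl
  -- D₂ vanishes on {t = 0}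
  have hD₂0 : ∀ s (z : E), (((0:ℝ), s), z) ∈ W → D₂ (((0:ℝ), s), z) = 0 := by
    intro s z hq
    have hcurve : HasDerivAt (fun s' : ℝ => (((0:ℝ), s'), z)) (((0:ℝ), (1:ℝ)), (0:E)) s :=
      ((hasDerivAt_const s (0:ℝ)).prodMk (hasDerivAt_id s)).prodMk (hasDerivAt_const s z)
    have h1 : HasDerivAt (fun s' => G (((0:ℝ), s'), z)) (D₂ (((0:ℝ), s), z)) s :=
      by have := (hDq _ hq).comp_hasDerivAt s hcurve; exact this
    have hev : (fun s' => G (((0:ℝ), s'), z)) =ᶠ[𝓝 s] fun _ => g 0 0 z := by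
      have hs' : ∀ᶠ s' in 𝓝 s, ((0:ℝ), s') ∈ interior V := by
        have hc : Continuous fun s' : ℝ => ((0:ℝ), s') :=
          continuous_const.prodMk continuous_id
        exact hc.continuousAt.preimage_mem_nhds (isOpen_interior.mem_nhds hq.1)
      filter_upwards [hs'] with s' h
      exact hind s' z (interior_subset h) hq.2
    have h0 : HasDerivAt (fun s' => G (((0:ℝ), s'), z)) 0 s :=
      (hasDerivAt_const s (g 0 0 z)).congr_of_eventuallyEq hev
    exact h1.unique h0
  -- candidate derivative
  set F' : ℝ × E → (ℝ × E →L[ℝ] B) := fun p =>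
    (ContinuousLinearMap.fst ℝ ℝ E).smulRight
        (D₁ (Φ p) + (Real.log p.1 + 1) • D₂ (Φ p))
      + (DZ (Φ p)).comp (ContinuousLinearMap.snd ℝ ℝ E) with hF'def
  -- dist formula in the product space
  have hdist : ∀ (t' s' : ℝ) (z' : E) (t s : ℝ) (z : E),
      dist (((t', s'), z')) (((t, s), z)) = max (max |t' - t| |s' - s|) (dist z' z) := by
    intro t' s' z' t s z
    simp [Prod.dist_eq, Real.dist_eq]
  -- base points
  have hq₁W : ∀ z₁ ∈ Ω, ((((0:ℝ)), ((0:ℝ))), z₁) ∈ W := fun z₁ hz₁ =>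
    ⟨mem_interior_iff_mem_nhds.2 hV, hz₁⟩
  -- derivative in z at base points
  have hzd : ∀ z₁ ∈ Ω, HasFDerivAt (fun z : E => G (((0:ℝ), (0:ℝ)), z))
      (DZ (((0:ℝ), (0:ℝ)), z₁)) z₁ := by
    intro z₁ hz₁
    have h := (hDq _ (hq₁W z₁ hz₁)).comp z₁
      ((ContinuousLinearMap.inr ℝ (ℝ × ℝ) E).hasFDerivAt)
    exact h
  -- HasFDerivAt at points with t = 0
  have hA : ∀ z₁ ∈ Ω, HasFDerivAt (fun p : ℝ × E => f p.1 p.2)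
      ((ContinuousLinearMap.fst ℝ ℝ E).smulRight (D₁ (((0:ℝ), (0:ℝ)), z₁))
        + (DZ (((0:ℝ), (0:ℝ)), z₁)).comp (ContinuousLinearMap.snd ℝ ℝ E))
      ((0:ℝ), z₁) := by
    intro z₁ hz₁
    have hq₁ : ((((0:ℝ)), ((0:ℝ))), z₁) ∈ W := hq₁W z₁ hz₁
    rw [hfG, hasFDerivAt_iff_isLittleO_nhds_zero, Asymptotics.isLittleO_iff]
    intro c hc
    have hc2 : (0:ℝ) < c / 2 := by positivity
    -- find r > 0 with good properties
    have h1 : ∀ᶠ q in 𝓝 ((((0:ℝ)), ((0:ℝ))), z₁), q ∈ W ∧ ‖D₁ q - D₁ ((((0:ℝ)), ((0:ℝ))), z₁)‖ ≤ c / 2 := by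
      have hD₁at : ContinuousAt D₁ ((((0:ℝ)), ((0:ℝ))), z₁) :=
        hD₁c.continuousAt (hWo.mem_nhds hq₁)
      have h2 := Metric.tendsto_nhds.1 hD₁at (c / 2) hc2
      filter_upwards [hWo.mem_nhds hq₁, h2] with q hq hq2
      exact ⟨hq, by rw [← dist_eq_norm]; exact hq2.le⟩
    obtain ⟨r, hr0, hrsub⟩ := Metric.nhds_basis_closedBall.eventually_iff.1 h1
    -- little-o in z
    have hCw : ∀ᶠ w : E in 𝓝 0,
        ‖G (((0:ℝ), (0:ℝ)), z₁ + w) - G (((0:ℝ), (0:ℝ)), z₁)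
          - DZ (((0:ℝ), (0:ℝ)), z₁) w‖ ≤ c / 2 * ‖w‖ := by
      have := hasFDerivAt_iff_isLittleO_nhds_zero.1 (hzd z₁ hz₁)
      exact Asymptotics.isLittleO_iff.1 this hc2
    have hCw' : ∀ᶠ p : ℝ × E in 𝓝 0,
        ‖G (((0:ℝ), (0:ℝ)), z₁ + p.2) - G (((0:ℝ), (0:ℝ)), z₁)
          - DZ (((0:ℝ), (0:ℝ)), z₁) p.2‖ ≤ c / 2 * ‖p.2‖ := by
      have hs : Filter.Tendsto (fun p : ℝ × E => p.2) (𝓝 0) (𝓝 0) :=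
        continuous_snd.tendsto' 0 0 rfl
      exact hs.eventually hCw
    -- smallness of coordinates
    have e1 : ∀ᶠ p : ℝ × E in 𝓝 0, |p.1| ≤ r := by
      have hs : Filter.Tendsto (fun p : ℝ × E => p.1) (𝓝 0) (𝓝 0) :=
        continuous_fst.tendsto' 0 0 rfl
      filter_upwards [hs.eventually (Metric.eventually_nhds_iff_ball.2
        ⟨r, hr0, fun y hy => hy⟩)] with p hp
      have := hp
      rw [Metric.mem_ball, Real.dist_eq, sub_zero] at this
      exact this.le
    have e2 : ∀ᶠ p : ℝ × E in 𝓝 0, |φ p.1| ≤ r := by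
      have hs : Filter.Tendsto (fun p : ℝ × E => φ p.1) (𝓝 0) (𝓝 0) := by
        have : Continuous fun p : ℝ × E => φ p.1 := hφc.comp continuous_fst
        simpa [hφ0] using this.tendsto' 0 (φ 0) rfl
      filter_upwards [hs.eventually (Metric.eventually_nhds_iff_ball.2
        ⟨r, hr0, fun y hy => hy⟩)] with p hp
      have := hp
      rw [Metric.mem_ball, Real.dist_eq, sub_zero] at this
      exact this.le
    have e3 : ∀ᶠ p : ℝ × E in 𝓝 0, ‖p.2‖ ≤ r := by
      have hs : Filter.Tendsto (fun p : ℝ × E => p.2) (𝓝 0) (𝓝 0) :=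
        continuous_snd.tendsto' 0 0 rfl
      filter_upwards [hs.eventually (Metric.eventually_nhds_iff_ball.2
        ⟨r, hr0, fun y hy => hy⟩)] with p hp
      have := hp
      rw [Metric.mem_ball, dist_zero_right] at this
      exact this.le
    filter_upwards [e1, e2, e3, hCw'] with p h1t h2t h3t hCt
    -- notation
    obtain ⟨t, w⟩ := p
    simp only at h1t h2t h3t hCt ⊢
    set s : ℝ := φ t with hsdef
    set z : E := z₁ + w with hzdef
    -- the three pieces
    have hq0 : ∀ u : ℝ, |u| ≤ r → (((u, s), z)) ∈ Metric.closedBall ((((0:ℝ)), ((0:ℝ))), z₁) r := by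
      intro u hu
      rw [Metric.mem_closedBall, hdist]
      simp only [sub_zero]
      have : dist z z₁ ≤ r := by
        rw [hzdef, dist_eq_norm]; simpa using h3t
      exact max_le (max_le hu h2t) this
    have huabs : ∀ u ∈ Set.uIcc (0:ℝ) t, |u| ≤ |t| := by
      intro u hu
      rw [Set.mem_uIcc] at hu
      rcases hu with ⟨hu1, hu2⟩ | ⟨hu1, hu2⟩
      · rw [abs_of_nonneg hu1]; exact hu2.trans (le_abs_self t)
      · rw [abs_of_nonpos hu2]
        have h1 := neg_le_abs t
        linarith
    -- mean value estimate for the t-increment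
    have hmean : ‖G ((t, s), z) - G (((0:ℝ), s), z) - t • D₁ ((((0:ℝ)), ((0:ℝ))), z₁)‖
        ≤ c / 2 * |t| := by
      have hder : ∀ u ∈ Set.uIcc (0:ℝ) t,
          HasFDerivWithinAt (fun u : ℝ => G ((u, s), z))
            ((1 : ℝ →L[ℝ] ℝ).smulRight (D₁ ((u, s), z))) (Set.uIcc (0:ℝ) t) u := by
        intro u hu
        have huW : ((u, s), z) ∈ W :=
          hrsub (hq0 u ((huabs u hu).trans h1t)) |>.1
        have hcurve : HasDerivAt (fun u : ℝ => ((u, s), z)) (((1:ℝ), (0:ℝ)), (0:E)) u :=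
          ((hasDerivAt_id u).prodMk (hasDerivAt_const u s)).prodMk (hasDerivAt_const u z)
        have := (hDq _ huW).comp_hasDerivAt u hcurve
        exact (hasDerivAt_iff_hasFDerivAt.1 this).hasFDerivWithinAt
      have hbound : ∀ u ∈ Set.uIcc (0:ℝ) t,
          ‖(1 : ℝ →L[ℝ] ℝ).smulRight (D₁ ((u, s), z))
            - (1 : ℝ →L[ℝ] ℝ).smulRight (D₁ ((((0:ℝ)), ((0:ℝ))), z₁))‖ ≤ c / 2 := by
        intro u hu
        have h : (1 : ℝ →L[ℝ] ℝ).smulRight (D₁ ((u, s), z))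
            - (1 : ℝ →L[ℝ] ℝ).smulRight (D₁ ((((0:ℝ)), ((0:ℝ))), z₁))
            = (1 : ℝ →L[ℝ] ℝ).smulRight
                (D₁ ((u, s), z) - D₁ ((((0:ℝ)), ((0:ℝ))), z₁)) := by
          ext x; simp [smul_sub]
        rw [h, ContinuousLinearMap.norm_smulRight_apply]
        have h2 := (hrsub (hq0 u ((huabs u hu).trans h1t))).2
        calc ‖(1 : ℝ →L[ℝ] ℝ)‖ * ‖D₁ ((u, s), z) - D₁ ((((0:ℝ)), ((0:ℝ))), z₁)‖
            ≤ 1 * (c / 2) := by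
              apply mul_le_mul (ContinuousLinearMap.norm_id_le) h2 (norm_nonneg _) zero_le_one
          _ = c / 2 := one_mul _
      have := (convex_uIcc (0:ℝ) t).norm_image_sub_le_of_norm_hasFDerivWithin_le'
        hder hbound Set.left_mem_uIcc Set.right_mem_uIcc
      simpa using this
    -- middle term vanishes
    have hmid : G (((0:ℝ), s), z) = G (((0:ℝ), (0:ℝ)), z) := by
      have hW0 : (((0:ℝ), s), z) ∈ W := hrsub (hq0 0 (by simpa using hr0.le)) |>.1
      have : g 0 s z = g 0 0 z := hind s z (interior_subset hW0.1) hW0.2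
      simpa [hGdef] using this
    -- assemble
    have hL : G (Φ (((0:ℝ), z₁) + (t, w))) - G (Φ ((0:ℝ), z₁))
        - ((ContinuousLinearMap.fst ℝ ℝ E).smulRight (D₁ ((((0:ℝ)), ((0:ℝ))), z₁))
          + (DZ ((((0:ℝ)), ((0:ℝ))), z₁)).comp (ContinuousLinearMap.snd ℝ ℝ E)) (t, w)
        = (G ((t, s), z) - G (((0:ℝ), s), z) - t • D₁ ((((0:ℝ)), ((0:ℝ))), z₁))
          + (G (((0:ℝ), s), z) - G (((0:ℝ), (0:ℝ)), z))
          + (G (((0:ℝ), (0:ℝ)), z) - G (((0:ℝ), (0:ℝ)), z₁)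
              - DZ ((((0:ℝ)), ((0:ℝ))), z₁) w) := by
      have hΦ1 : Φ (((0:ℝ), z₁) + (t, w)) = ((t, s), z) := by
        simp [hΦdef, hsdef, hzdef, Prod.add_def]
      have hΦ2 : Φ ((0:ℝ), z₁) = (((0:ℝ), (0:ℝ)), z₁) := by
        simp [hΦdef, hφ0]
      rw [hΦ1, hΦ2]
      simp only [ContinuousLinearMap.add_apply, ContinuousLinearMap.smulRight_apply,
        ContinuousLinearMap.coe_fst', ContinuousLinearMap.coe_comp',
        Function.comp_apply, ContinuousLinearMap.coe_snd']
      abel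
    rw [hL, hmid]
    have : ‖(G ((t, s), z) - G (((0:ℝ), (0:ℝ)), z) - t • D₁ ((((0:ℝ)), ((0:ℝ))), z₁))
          + (G (((0:ℝ), (0:ℝ)), z) - G (((0:ℝ), (0:ℝ)), z))
          + (G (((0:ℝ), (0:ℝ)), z) - G (((0:ℝ), (0:ℝ)), z₁)
              - DZ ((((0:ℝ)), ((0:ℝ))), z₁) w)‖
        ≤ c / 2 * |t| + c / 2 * ‖w‖ := by
      rw [hmid] at hmean
      calc _ ≤ ‖(G ((t, s), z) - G (((0:ℝ), (0:ℝ)), z) - t • D₁ ((((0:ℝ)), ((0:ℝ))), z₁))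
          + (G (((0:ℝ), (0:ℝ)), z) - G (((0:ℝ), (0:ℝ)), z))‖
          + ‖G (((0:ℝ), (0:ℝ)), z) - G (((0:ℝ), (0:ℝ)), z₁)
              - DZ ((((0:ℝ)), ((0:ℝ))), z₁) w‖ := norm_add_le _ _
        _ ≤ c / 2 * |t| + c / 2 * ‖w‖ := by
            apply add_le_add
            · simpa using hmean
            · simpa [hzdef] using hCt
    refine this.trans ?_
    have ht' : |t| ≤ ‖(t, w)‖ := by
      simpa [Real.norm_eq_abs] using norm_fst_le (t, w)
    have hw' : ‖w‖ ≤ ‖(t, w)‖ := norm_snd_le (t, w)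
    calc c / 2 * |t| + c / 2 * ‖w‖
        ≤ c / 2 * ‖(t, w)‖ + c / 2 * ‖(t, w)‖ := by
          apply add_le_add <;> apply mul_le_mul_of_nonneg_left (by assumption) hc2.le
      _ = c * ‖(t, w)‖ := by ring
  -- F' at t = 0 points simplifies
  have hF'0 : ∀ z₁ ∈ Ω, F' ((0:ℝ), z₁)
      = (ContinuousLinearMap.fst ℝ ℝ E).smulRight (D₁ ((((0:ℝ)), ((0:ℝ))), z₁))
        + (DZ ((((0:ℝ)), ((0:ℝ))), z₁)).comp (ContinuousLinearMap.snd ℝ ℝ E) := by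
    intro z₁ hz₁
    have h0 : D₂ ((((0:ℝ)), ((0:ℝ))), z₁) = 0 := hD₂0 0 z₁ (hq₁W z₁ hz₁)
    have hΦ2 : Φ ((0:ℝ), z₁) = (((0:ℝ), (0:ℝ)), z₁) := by simp [hΦdef, hφ0]
    rw [hF'def]
    simp only [hΦ2, h0, smul_zero, add_zero]
  -- HasFDerivAt at points with t ≠ 0
  have hB : ∀ p : ℝ × E, p.1 ≠ 0 → Φ p ∈ W →
      HasFDerivAt (fun p : ℝ × E => f p.1 p.2) (F' p) p := by
    intro p hp hpW
    rw [hfG]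
    have hφ' : HasDerivAt φ (Real.log p.1 + 1) p.1 := Real.hasDerivAt_mul_log hp
    have h1 : HasFDerivAt (fun q : ℝ × E => q.1) (ContinuousLinearMap.fst ℝ ℝ E) p :=
      hasFDerivAt_fst
    have h2 : HasFDerivAt (fun q : ℝ × E => φ q.1)
        ((Real.log p.1 + 1) • ContinuousLinearMap.fst ℝ ℝ E) p :=
      hφ'.comp_hasFDerivAt p h1
    have hΦ' : HasFDerivAt Φ
        (((ContinuousLinearMap.fst ℝ ℝ E).prod
            ((Real.log p.1 + 1) • ContinuousLinearMap.fst ℝ ℝ E)).prod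
          (ContinuousLinearMap.snd ℝ ℝ E)) p := (h1.prodMk h2).prodMk hasFDerivAt_snd
    have hcomp := (hDq _ hpW).comp p hΦ'
    have heq : (D (Φ p)).comp
        (((ContinuousLinearMap.fst ℝ ℝ E).prod
            ((Real.log p.1 + 1) • ContinuousLinearMap.fst ℝ ℝ E)).prod
          (ContinuousLinearMap.snd ℝ ℝ E)) = F' p := by
      refine ContinuousLinearMap.ext fun x => ?_
      obtain ⟨a, v⟩ := x
      rw [hF'def]
      simp only [ContinuousLinearMap.coe_comp', Function.comp_apply,
        ContinuousLinearMap.prod_apply, ContinuousLinearMap.coe_fst',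
        ContinuousLinearMap.coe_snd', ContinuousLinearMap.smul_apply,
        ContinuousLinearMap.add_apply, ContinuousLinearMap.smulRight_apply]
      rw [show ((Real.log p.1 + 1) • a) = (Real.log p.1 + 1) * a from rfl]
      rw [hDdec (Φ p) a ((Real.log p.1 + 1) * a) v]
      rw [smul_add, smul_smul, mul_comm a (Real.log p.1 + 1)]
    rw [← heq]
    exact hcomp
  -- everything on U := Φ ⁻¹' W
  have hUo : IsOpen (Φ ⁻¹' W) := hWo.preimage hΦc
  have hU0 : ∀ z ∈ Ω, ((0:ℝ), z) ∈ Φ ⁻¹' W := by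
    intro z hz
    show Φ ((0:ℝ), z) ∈ W
    have : Φ ((0:ℝ), z) = (((0:ℝ), (0:ℝ)), z) := by simp [hΦdef, hφ0]
    rw [this]; exact hq₁W z hz
  have hAll : ∀ q ∈ Φ ⁻¹' W, HasFDerivAt (fun p : ℝ × E => f p.1 p.2) (F' q) q := by
    intro q hq
    rcases eq_or_ne q.1 0 with h0 | h0
    · obtain ⟨t, z⟩ := q
      simp only at h0
      subst h0
      have hzΩ : z ∈ Ω := by
        have : Φ ((0:ℝ), z) ∈ W := hq
        exact this.2
      rw [hF'0 z hzΩ]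
      exact hA z hzΩ
    · exact hB q h0 hq
  -- continuity of F' on U
  have hF'c : ContinuousOn F' (Φ ⁻¹' W) := by
    intro p hp
    suffices h : ContinuousAt F' p from h.continuousWithinAt
    have hq : Φ p ∈ W := hp
    have hΦp : ContinuousAt Φ p := hΦc.continuousAt
    have hD₁p : ContinuousAt (fun p : ℝ × E => D₁ (Φ p)) p :=
      (hD₁c.continuousAt (hWo.mem_nhds hq)).comp hΦp
    have hD₂p : ContinuousAt (fun p : ℝ × E => D₂ (Φ p)) p :=
      (hD₂c.continuousAt (hWo.mem_nhds hq)).comp hΦp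
    have hDZp : ContinuousAt (fun p : ℝ × E => DZ (Φ p)) p :=
      (hDZc.continuousAt (hWo.mem_nhds hq)).comp hΦp
    have hS : ContinuousAt (fun p : ℝ × E => (Real.log p.1 + 1) • D₂ (Φ p)) p := by
      rcases eq_or_ne p.1 0 with h0 | h0
      · -- singular point: squeeze to 0
        have hΦp0 : Φ p = (((0:ℝ), φ (0:ℝ)), p.2) := by simp [hΦdef, h0]
        have hD₂Φp : D₂ (Φ p) = 0 := by
          rw [hΦp0]
          exact hD₂0 (φ 0) p.2 (by rw [← hΦp0]; exact hq)
        -- Lipschitz bound for D₂ near Φ p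
        obtain ⟨K, T, hT, hlip⟩ :=
          ((hD₂sm.contDiffAt (hWo.mem_nhds hq)).of_le (by norm_num)).exists_lipschitzOnWith
        obtain ⟨ρ, hρ0, hρsub⟩ :=
          Metric.mem_nhds_iff.1 (Filter.inter_mem hT (hWo.mem_nhds hq))
        have hev : ∀ᶠ p' : ℝ × E in 𝓝 p, Φ p' ∈ Metric.ball (Φ p) ρ :=
          hΦp.preimage_mem_nhds (Metric.ball_mem_nhds _ hρ0)
        have hbound : ∀ᶠ p' : ℝ × E in 𝓝 p,
            ‖(Real.log p'.1 + 1) • D₂ (Φ p')‖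
              ≤ (K : ℝ) * |p'.1 * (Real.log p'.1 + 1)| := by
          filter_upwards [hev] with p' hp'
          have hΦp' : Φ p' = ((p'.1, φ p'.1), p'.2) := by rw [hΦdef]
          have hp0 : Φ p = (((0:ℝ), (0:ℝ)), p.2) := by
            rw [hΦdef]; simp [h0, hφ0]
          -- the projected point
          have hproj : ((((0:ℝ)), φ p'.1), p'.2) ∈ Metric.ball (Φ p) ρ := by
            rw [Metric.mem_ball] at hp' ⊢
            rw [hΦp', hp0, hdist] at hp'
            rw [hp0, hdist]
            refine lt_of_le_of_lt ?_ hp'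
            apply max_le_max _ le_rfl
            apply max_le_max _ le_rfl
            simp
          have hball' : ((((0:ℝ)), φ p'.1), p'.2) ∈ T ∩ W := hρsub hproj
          have hballp' : Φ p' ∈ T ∩ W := hρsub hp'
          have hzero : D₂ ((((0:ℝ)), φ p'.1), p'.2) = 0 :=
            hD₂0 (φ p'.1) p'.2 hball'.2
          have hlipest : ‖D₂ (Φ p')‖ ≤ (K : ℝ) * |p'.1| := by
            have := hlip.dist_le_mul (Φ p') hballp'.1 ((((0:ℝ)), φ p'.1), p'.2) hball'.1
            rw [dist_eq_norm, hzero, sub_zero] at this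
            refine this.trans ?_
            apply mul_le_mul_of_nonneg_left _ K.2
            rw [hΦp', hdist]
            simp
          rw [norm_smul, Real.norm_eq_abs]
          calc |Real.log p'.1 + 1| * ‖D₂ (Φ p')‖
              ≤ |Real.log p'.1 + 1| * ((K : ℝ) * |p'.1|) := by
                apply mul_le_mul_of_nonneg_left hlipest (abs_nonneg _)
            _ = (K : ℝ) * |p'.1 * (Real.log p'.1 + 1)| := by
                rw [abs_mul]; ring
        have htend : Filter.Tendsto
            (fun p' : ℝ × E => (K : ℝ) * |p'.1 * (Real.log p'.1 + 1)|) (𝓝 p) (𝓝 0) := by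
          have hcont : Continuous fun p' : ℝ × E =>
              (K : ℝ) * |p'.1 * (Real.log p'.1 + 1)| := by
            have : Continuous fun u : ℝ => u * (Real.log u + 1) := by
              have h := Real.continuous_mul_log.add continuous_id
              exact h.congr (fun u => by show u * Real.log u + u = u * (Real.log u + 1); ring)
            exact continuous_const.mul ((this.comp continuous_fst).abs)
          have hval : (K : ℝ) * |p.1 * (Real.log p.1 + 1)| = 0 := by
            simp [h0]
          simpa [hval, h0] using hcont.tendsto p
        have := squeeze_zero_norm' hbound htend
        rw [ContinuousAt]
        have hval0 : (Real.log p.1 + 1) • D₂ (Φ p) = 0 := by rw [hD₂Φp, smul_zero]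
        rw [hval0]
        exact this
      · -- regular point
        have hlog : ContinuousAt (fun p' : ℝ × E => Real.log p'.1 + 1) p :=
          ((Real.continuousAt_log h0).comp continuous_fst.continuousAt).add
            continuousAt_const
        exact hlog.smul hD₂p
    -- assemble continuity of F'
    have hterm1 : ContinuousAt (fun p : ℝ × E =>
        (ContinuousLinearMap.fst ℝ ℝ E).smulRight
          (D₁ (Φ p) + (Real.log p.1 + 1) • D₂ (Φ p))) p := by
      have hc : Continuous fun b : B => (ContinuousLinearMap.fst ℝ ℝ E).smulRight b :=
        (isBoundedBilinearMap_smulRight : IsBoundedBilinearMap ℝ _).continuous_right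
      exact hc.continuousAt.comp (hD₁p.add hS)
    have hterm2 : ContinuousAt (fun p : ℝ × E =>
        (DZ (Φ p)).comp (ContinuousLinearMap.snd ℝ ℝ E)) p := by
      have hcont : Continuous fun A : E →L[ℝ] B => A.comp (ContinuousLinearMap.snd ℝ ℝ E) :=
        Continuous.clm_comp continuous_id continuous_const
      exact hcont.continuousAt.comp hDZp
    exact hterm1.add hterm2
  -- conclusion
  refine ⟨Φ ⁻¹' W, hUo, hU0, ?_, ?_⟩
  · intro p hp
    have : ContDiffAt ℝ 1 (fun p : ℝ × E => f p.1 p.2) p := by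
      rw [contDiffAt_one_iff]
      exact ⟨F', Φ ⁻¹' W, hUo.mem_nhds hp, hF'c, hAll⟩
    exact this.contDiffWithinAt
  · intro z₀ hz₀
    have hd1 : deriv (fun t => g t 0 z₀) 0 = D₁ ((((0:ℝ)), ((0:ℝ))), z₀) := by
      have hcurve : HasDerivAt (fun t : ℝ => ((t, (0:ℝ)), z₀)) (((1:ℝ), (0:ℝ)), (0:E)) 0 :=
        ((hasDerivAt_id (0:ℝ)).prodMk (hasDerivAt_const 0 (0:ℝ))).prodMk (hasDerivAt_const 0 z₀)
      have h := (hDq _ (hq₁W z₀ hz₀)).comp_hasDerivAt 0 hcurve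
      exact h.deriv
    have hd2 : fderiv ℝ (fun z => g 0 0 z) z₀ = DZ ((((0:ℝ)), ((0:ℝ))), z₀) :=
      (hzd z₀ hz₀).fderiv
    rw [hd1, hd2]
    exact hA z₀ hz₀
end
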